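/- (Utility of the sample-and-threshold mechanism.) Let W be a natural number, p a real number with 0 < p < 1, and τ a natural number with τ ≤ p·W. If each of W clients holding a common value independently participates with probability p, then the probability that fewer than τ sampled copies of the value appear (so the value is removed by thresholding) satisfies Σ_{v=0}^{τ-1} C(W, v)·p^{v}·(1 - p)^{W - v} ≤ exp(-(p·W - τ)²/(2·W·p)). -/

import Mathlib

open Finset Real

lemma exp_neg_le_quad {t : ℝ} (ht : 0 ≤ t) : Real.exp (-t) ≤ 1 - t + t ^ 2 / 2 := by
  have key : MonotoneOn (fun x : ℝ => 1 - x + x ^ 2 / 2 - Real.exp (-x)) (Set.Ici 0) := by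
    apply monotoneOn_of_deriv_nonneg (convex_Ici 0)
    · fun_prop
    · fun_prop
    · intro x hx
      have : deriv (fun x : ℝ => 1 - x + x ^ 2 / 2 - Real.exp (-x)) x
          = -1 + x + Real.exp (-x) := by
        have h1 : HasDerivAt (fun x : ℝ => 1 - x + x ^ 2 / 2 - Real.exp (-x))
            (-1 + x + Real.exp (-x)) x := by
          have hexp : HasDerivAt (fun x : ℝ => Real.exp (-x)) (Real.exp (-x) * (-1)) x :=
            (Real.hasDerivAt_exp (-x)).comp x (hasDerivAt_neg x)
          have := (((hasDerivAt_id x).const_sub 1).add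
            ((hasDerivAt_pow 2 x).div_const 2)).sub hexp
          exact this.congr_deriv (by norm_num)
        exact h1.deriv
      rw [this]
      nlinarith [Real.add_one_le_exp (-x), (interior_subset hx : (0:ℝ) ≤ x)]
  have h := key (Set.self_mem_Ici) (Set.mem_Ici.mpr ht) ht
  simp at h
  linarith

theorem sample_threshold_utility (W : ℕ) (p : ℝ) (hp0 : 0 < p) (hp1 : p < 1)
    (τ : ℕ) (hτ : (τ : ℝ) ≤ p * W) :
    ∑ v ∈ Finset.range τ, (W.choose v : ℝ) * p ^ v * (1 - p) ^ (W - v)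
      ≤ Real.exp (-(p * W - τ) ^ 2 / (2 * W * p)) := by
  rcases Nat.eq_zero_or_pos W with hW | hW
  · subst hW
    have : τ = 0 := by
      have : (τ : ℝ) ≤ 0 := by simpa using hτ
      exact_mod_cast le_antisymm (by exact_mod_cast this) (Nat.zero_le τ)
    subst this
    simp [(Real.exp_pos _).le]
  have hWR : (0 : ℝ) < W := by exact_mod_cast hW
  have hWp : 0 < p * W := mul_pos hp0 hWR
  have hq : 0 < 1 - p := by linarith
  set t : ℝ := (p * W - τ) / (p * W) with ht_def
  have ht0 : 0 ≤ t := div_nonneg (by linarith) hWp.le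
  have hτW : τ ≤ W := by
    have : (τ : ℝ) ≤ W := le_trans hτ (by nlinarith)
    exact_mod_cast this
  have hbase : 0 ≤ p * Real.exp (-t) + (1 - p) := by positivity
  calc ∑ v ∈ Finset.range τ, (W.choose v : ℝ) * p ^ v * (1 - p) ^ (W - v)
      ≤ ∑ v ∈ Finset.range τ,
          Real.exp (t * ((τ : ℝ) - v)) * ((W.choose v : ℝ) * p ^ v * (1 - p) ^ (W - v)) := by
        apply Finset.sum_le_sum
        intro v hv
        have hv' : (v : ℝ) ≤ τ := by
          exact_mod_cast (Finset.mem_range.mp hv).le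
        have h1 : 1 ≤ Real.exp (t * ((τ : ℝ) - v)) :=
          Real.one_le_exp (mul_nonneg ht0 (by linarith))
        have hterm : 0 ≤ (W.choose v : ℝ) * p ^ v * (1 - p) ^ (W - v) := by positivity
        nlinarith
    _ ≤ ∑ v ∈ Finset.range (W + 1),
          Real.exp (t * ((τ : ℝ) - v)) * ((W.choose v : ℝ) * p ^ v * (1 - p) ^ (W - v)) := by
        apply Finset.sum_le_sum_of_subset_of_nonneg
        · exact Finset.range_subset_range.mpr (by omega)
        · intro v _ _
          positivity
    _ = Real.exp (t * τ) * (p * Real.exp (-t) + (1 - p)) ^ W := by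
        rw [add_pow, Finset.mul_sum]
        apply Finset.sum_congr rfl
        intro v hv
        have : Real.exp (t * ((τ : ℝ) - v)) = Real.exp (t * τ) * Real.exp (-t) ^ v := by
          rw [← Real.exp_nat_mul, ← Real.exp_add]
          ring_nf
        rw [this, mul_pow]
        ring
    _ ≤ Real.exp (t * τ) * Real.exp (p * (Real.exp (-t) - 1)) ^ W := by
        apply mul_le_mul_of_nonneg_left _ (Real.exp_pos _).le
        apply pow_le_pow_left₀ hbase
        have := Real.add_one_le_exp (p * (Real.exp (-t) - 1))
        linarith
    _ = Real.exp (t * τ + W * (p * (Real.exp (-t) - 1))) := by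
        rw [← Real.exp_nat_mul, ← Real.exp_add]
    _ ≤ Real.exp (t * τ + W * (p * (-t + t ^ 2 / 2))) := by
        apply Real.exp_le_exp.mpr
        have h2 := exp_neg_le_quad ht0
        have : Real.exp (-t) - 1 ≤ -t + t ^ 2 / 2 := by linarith
        nlinarith
    _ = Real.exp (-(p * W - τ) ^ 2 / (2 * W * p)) := by
        congr 1
        rw [ht_def]
        field_simp
        ring
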